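/- One-step Hahn–Banach extension: let X be a real linear 2-normed space, W a subspace, x₀ ∈ X \ W, and T_W a bounded b-linear functional on W × ⟨b⟩. Then T_W extends to a bounded b-linear functional T₀ on (W + ℝx₀) × ⟨b⟩ with ‖T₀‖ = ‖T_W‖. -/
import Mathlib


open Filter Topology

/-- A linear 2-normed space structure (Gähler): a 2-norm on a real vector space. -/
structure TwoNorm (X : Type*) [AddCommGroup X] [Module ℝ X] where
  N : X → X → ℝ
  eq_zero_iff : ∀ x y, N x y = 0 ↔ ¬ LinearIndependent ℝ ![x, y]
  symm : ∀ x y, N x y = N y x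
  smul_left : ∀ (a : ℝ) (x y : X), N (a • x) y = |a| * N x y
  add_right : ∀ x y z : X, N x (y + z) ≤ N x y + N x z

variable {X : Type*} [AddCommGroup X] [Module ℝ X]

/-- Convergence of a sequence in a linear 2-normed space. -/
def TwoNorm.Conv (P : TwoNorm X) (x : ℕ → X) (l : X) : Prop :=
  ∀ y : X, Tendsto (fun n => P.N (x n - l) y) atTop (nhds 0)

/-- Cauchy sequence in a linear 2-normed space. -/
def TwoNorm.IsCauchySeq (P : TwoNorm X) (x : ℕ → X) : Prop :=
  ∀ z : X, Tendsto (fun p : ℕ × ℕ => P.N (x p.1 - x p.2) z) atTop (nhds 0)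

/-- A 2-Banach space: every Cauchy sequence converges. -/
def TwoNorm.Complete (P : TwoNorm X) : Prop :=
  ∀ x : ℕ → X, P.IsCauchySeq x → ∃ l, P.Conv x l

/-- A b-linear functional (identified with `x ↦ T (x, b)`, a linear map) is bounded. -/
def TwoNorm.BddB (P : TwoNorm X) (b : X) (T : X →ₗ[ℝ] ℝ) : Prop :=
  ∃ M : ℝ, 0 < M ∧ ∀ x, |T x| ≤ M * P.N x b

/-- Norm of a bounded b-linear functional. -/
noncomputable def TwoNorm.bNorm (P : TwoNorm X) (b : X) (T : X →ₗ[ℝ] ℝ) : ℝ :=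
  sInf {M : ℝ | 0 < M ∧ ∀ x, |T x| ≤ M * P.N x b}

/-- Boundedness of a b-linear functional defined on a subspace `W`. -/
def TwoNorm.BddBOn (P : TwoNorm X) (b : X) (W : Submodule ℝ X) (T : W →ₗ[ℝ] ℝ) : Prop :=
  ∃ M : ℝ, 0 < M ∧ ∀ x : W, |T x| ≤ M * P.N x b

/-- Norm of a bounded b-linear functional defined on a subspace `W`. -/
noncomputable def TwoNorm.bNormOn (P : TwoNorm X) (b : X) (W : Submodule ℝ X)
    (T : W →ₗ[ℝ] ℝ) : ℝ :=
  sInf {M : ℝ | 0 < M ∧ ∀ x : W, |T x| ≤ M * P.N x b}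

/-- Continuity at a point with respect to the open-ball topology of the 2-norm. -/
def TwoNorm.ContAt (P : TwoNorm X) (T : X →ₗ[ℝ] ℝ) (x₀ : X) : Prop :=
  ∀ ε > 0, ∃ (e : X) (δ : ℝ), 0 < δ ∧ ∀ x, P.N (x - x₀) e < δ → |T x - T x₀| < ε


theorem TwoNorm.N_zero_right' (P : TwoNorm X) (x : X) : P.N x 0 = 0 := by
  rw [P.eq_zero_iff]
  intro h
  simpa using h.ne_zero 1

theorem TwoNorm.N_neg_left' (P : TwoNorm X) (x y : X) : P.N (-x) y = P.N x y := by
  rw [show (-x : X) = (-1 : ℝ) • x by simp, P.smul_left]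
  simp

theorem TwoNorm.N_nonneg' (P : TwoNorm X) (x y : X) : 0 ≤ P.N x y := by
  have h := P.add_right x y (-y)
  rw [add_neg_cancel, P.N_zero_right'] at h
  have hneg : P.N x (-y) = P.N x y := by
    rw [P.symm x (-y), P.N_neg_left', P.symm]
  rw [hneg] at h
  linarith

theorem TwoNorm.N_add_left' (P : TwoNorm X) (x y z : X) :
    P.N (x + y) z ≤ P.N x z + P.N y z := by
  rw [P.symm (x + y) z, P.symm x z, P.symm y z]
  exact P.add_right z x y

theorem stmt14 (P : TwoNorm X) (b : X) (W : Submodule ℝ X) (x₀ : X)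
    (hx₀ : x₀ ∉ W) (TW : W →ₗ[ℝ] ℝ) (hTW : P.BddBOn b W TW) :
    ∃ T₀ : ↥(W ⊔ Submodule.span ℝ {x₀}) →ₗ[ℝ] ℝ,
      P.BddBOn b (W ⊔ Submodule.span ℝ {x₀}) T₀ ∧
      (∀ (x : X) (hx : x ∈ W), T₀ ⟨x, Submodule.mem_sup_left hx⟩ = TW ⟨x, hx⟩) ∧
      P.bNormOn b (W ⊔ Submodule.span ℝ {x₀}) T₀ = P.bNormOn b W TW := by
  classical
  obtain ⟨M₀, hM₀pos, hM₀⟩ := hTW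
  set S : Set ℝ := {M : ℝ | 0 < M ∧ ∀ x : W, |TW x| ≤ M * P.N x b} with hSdef
  have hSne : S.Nonempty := ⟨M₀, hM₀pos, hM₀⟩
  have hSbdd : BddBelow S := ⟨0, fun M hM => hM.1.le⟩
  set Ms := sInf S with hMsdef
  have hMs_nonneg : 0 ≤ Ms := le_csInf hSne fun M hM => hM.1.le
  have hMs_bound : ∀ x : W, |TW x| ≤ Ms * P.N (x : X) b := by
    intro x
    rcases eq_or_lt_of_le (P.N_nonneg' (x : X) b) with h | h
    · have h0 : |TW x| ≤ 0 := by
        have := hM₀ x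
        rw [← h] at this
        simpa using this
      calc |TW x| ≤ 0 := h0
        _ = Ms * P.N (x : X) b := by rw [← h]; ring
    · rw [← div_le_iff₀ h]
      exact le_csInf hSne fun M hM => (div_le_iff₀ h).mpr (hM.2 x)
  -- Hahn-Banach extension to all of X
  obtain ⟨g, hg1, hg2⟩ :=
    exists_extension_of_le_sublinear ⟨W, TW⟩ (fun x => Ms * P.N x b)
      (fun c hc x => by show Ms * P.N (c • x) b = c * (Ms * P.N x b); rw [P.smul_left, abs_of_pos hc]; ring)
      (fun x y => by
        show Ms * P.N (x + y) b ≤ Ms * P.N x b + Ms * P.N y b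
        have := P.N_add_left' x y b
        nlinarith [P.N_nonneg' x b, P.N_nonneg' y b])
      (fun x => (le_abs_self _).trans (hMs_bound x))
  have hgabs : ∀ x : X, |g x| ≤ Ms * P.N x b := by
    intro x
    rw [abs_le]
    constructor
    · have := hg2 (-x)
      rw [map_neg, P.N_neg_left'] at this
      linarith
    · exact hg2 x
  set V := W ⊔ Submodule.span ℝ {x₀} with hVdef
  refine ⟨g.domRestrict V, ⟨M₀, hM₀pos, ?_⟩, ?_, ?_⟩
  · intro x
    have h1 := hgabs (x : X)
    have h2 : Ms ≤ M₀ := csInf_le hSbdd ⟨hM₀pos, hM₀⟩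
    have h3 : Ms * P.N (x : X) b ≤ M₀ * P.N (x : X) b :=
      mul_le_mul_of_nonneg_right h2 (P.N_nonneg' _ _)
    simpa using h1.trans h3
  · intro x hx
    exact hg1 ⟨x, hx⟩
  · have hsets : {M : ℝ | 0 < M ∧ ∀ x : V, |g.domRestrict V x| ≤ M * P.N (x : X) b} = S := by
      ext M
      constructor
      · rintro ⟨hMpos, hM⟩
        refine ⟨hMpos, fun x => ?_⟩
        have := hM ⟨(x : X), Submodule.mem_sup_left x.2⟩
        rw [LinearMap.domRestrict_apply, hg1 x] at this
        exact this
      · rintro ⟨hMpos, hM⟩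
        refine ⟨hMpos, fun x => ?_⟩
        have h2 : Ms ≤ M := csInf_le hSbdd ⟨hMpos, hM⟩
        have h3 : Ms * P.N (x : X) b ≤ M * P.N (x : X) b :=
          mul_le_mul_of_nonneg_right h2 (P.N_nonneg' _ _)
        simpa using (hgabs (x : X)).trans h3
    simp only [TwoNorm.bNormOn]
    rw [hsets]
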